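/- Let p be a prime, let T ≤ GL₂(ℚ_p) be the subgroup of invertible diagonal matrices, and for j ∈ ℕ let u_j = [[1, p^{−j}], [0, 1]]. Then every g ∈ GL₂(ℚ_p) lies in the double coset T·u_j·K_p for exactly one j ∈ ℕ; that is, the double cosets T u_j K_p, j ≥ 0, are pairwise disjoint and their union is GL₂(ℚ_p). -/

import Mathlib

/-- The matrix `u_j = [[1, p^{−j}], [0, 1]]` over `ℚ_p`. -/
noncomputable def uMat (p : ℕ) [Fact (Nat.Prime p)] (j : ℕ) : Matrix (Fin 2) (Fin 2) ℚ_[p] :=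
  !![1, (p : ℚ_[p]) ^ (-(j:ℤ)); 0, 1]

/-- The maximal compact subgroup `K_p = GL₂(ℤ_p)`, viewed as the set of invertible matrices
`k` over `ℚ_p` such that all entries of `k` and of `k⁻¹` have norm at most `1`. -/
def Kp (p : ℕ) [Fact (Nat.Prime p)] : Set (Matrix (Fin 2) (Fin 2) ℚ_[p]) :=
  {k | IsUnit k ∧ ∀ i j, ‖k i j‖ ≤ 1 ∧ ‖k⁻¹ i j‖ ≤ 1}

namespace Stmt12Aux
variable {p : ℕ} [Fact (Nat.Prime p)]

lemma memKp_of {A B : Matrix (Fin 2) (Fin 2) ℚ_[p]} (h : A * B = 1)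
    (hA : ∀ i j, ‖A i j‖ ≤ 1) (hB : ∀ i j, ‖B i j‖ ≤ 1) : A ∈ Kp p := by
  refine ⟨(Matrix.isUnit_iff_isUnit_det _).2 (Matrix.isUnit_det_of_right_inverse h), fun i j => ⟨hA i j, ?_⟩⟩
  rw [Matrix.inv_eq_right_inv h]; exact hB i j

lemma entry_mul_le {A B : Matrix (Fin 2) (Fin 2) ℚ_[p]}
    (hA : ∀ i j, ‖A i j‖ ≤ 1) (hB : ∀ i j, ‖B i j‖ ≤ 1) (i j : Fin 2) :
    ‖(A * B) i j‖ ≤ 1 := by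
  rw [Matrix.mul_apply, Fin.sum_univ_two]
  refine le_trans (Padic.nonarchimedean _ _) (max_le ?_ ?_) <;>
    · rw [norm_mul]
      exact mul_le_one₀ (hA _ _) (norm_nonneg _) (hB _ _)

lemma Kp.mul {A B : Matrix (Fin 2) (Fin 2) ℚ_[p]} (hA : A ∈ Kp p) (hB : B ∈ Kp p) :
    A * B ∈ Kp p := by
  refine ⟨hA.1.mul hB.1, fun i j => ⟨entry_mul_le (fun i j => (hA.2 i j).1) (fun i j => (hB.2 i j).1) i j, ?_⟩⟩
  rw [Matrix.mul_inv_rev]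
  exact entry_mul_le (fun i j => (hB.2 i j).2) (fun i j => (hA.2 i j).2) i j

lemma Kp.inv {A : Matrix (Fin 2) (Fin 2) ℚ_[p]} (hA : A ∈ Kp p) : A⁻¹ ∈ Kp p := by
  have hd : IsUnit A.det := (Matrix.isUnit_iff_isUnit_det A).1 hA.1
  refine ⟨(Matrix.isUnit_iff_isUnit_det _).2 (Matrix.isUnit_det_of_right_inverse (Matrix.nonsing_inv_mul A hd)), fun i j => ?_⟩
  rw [Matrix.nonsing_inv_nonsing_inv A hd]
  exact ⟨(hA.2 i j).2, (hA.2 i j).1⟩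

end Stmt12Aux

namespace Stmt12Aux
variable {p : ℕ} [Fact (Nat.Prime p)]

lemma exists_triang (g : Matrix (Fin 2) (Fin 2) ℚ_[p]) (hg : IsUnit g) :
    ∃ b k1 : Matrix (Fin 2) (Fin 2) ℚ_[p],
      b 1 0 = 0 ∧ b 0 0 ≠ 0 ∧ b 1 1 ≠ 0 ∧ k1 ∈ Kp p ∧ g = b * k1 := by
  have hdg : g.det ≠ 0 := ((Matrix.isUnit_iff_isUnit_det g).1 hg).ne_zero
  by_cases h : ‖g 1 0‖ ≤ ‖g 1 1‖
  · -- g 1 1 ≠ 0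
    have h11 : g 1 1 ≠ 0 := by
      intro h0
      rw [h0, norm_zero] at h
      have h10 : g 1 0 = 0 := norm_le_zero_iff.mp h
      apply hdg
      rw [Matrix.det_fin_two, h0, h10]; ring
    set r : ℚ_[p] := g 1 0 / g 1 1 with hr
    have hrn : ‖r‖ ≤ 1 := by
      rw [hr, norm_div]
      exact div_le_one_of_le₀ h (norm_nonneg _)
    have hK : !![(1:ℚ_[p]), 0; -r, 1] * !![(1:ℚ_[p]), 0; r, 1] = 1 := by
      rw [Matrix.mul_fin_two, Matrix.one_fin_two]; congr 1 <;> ring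
    have hK' : !![(1:ℚ_[p]), 0; r, 1] * !![(1:ℚ_[p]), 0; -r, 1] = 1 := by
      rw [Matrix.mul_fin_two, Matrix.one_fin_two]; congr 1 <;> ring
    refine ⟨g * !![(1:ℚ_[p]), 0; -r, 1], !![(1:ℚ_[p]), 0; r, 1], ?_, ?_, ?_, ?_, ?_⟩
    · simp [Matrix.mul_apply, Fin.sum_univ_two, hr]
      field_simp
      ring
    · -- b 0 0 ≠ 0 via determinant
      have hdb : (g * !![(1:ℚ_[p]), 0; -r, 1]).det ≠ 0 := by
        rw [Matrix.det_mul, Matrix.det_fin_two_of]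
        simpa using hdg
      have hb10 : (g * !![(1:ℚ_[p]), 0; -r, 1]) 1 0 = 0 := by
        simp [Matrix.mul_apply, Fin.sum_univ_two, hr]; field_simp; ring
      rw [Matrix.det_fin_two, hb10] at hdb
      intro h0; apply hdb; rw [h0]; ring
    · simp [Matrix.mul_apply, Fin.sum_univ_two]; exact h11
    · refine memKp_of hK' ?_ ?_ <;>
        · intro i j; fin_cases i <;> fin_cases j <;>
            simp [hrn, norm_neg]
    · rw [Matrix.mul_assoc, hK, Matrix.mul_one]
  · push_neg at h
    have h10 : g 1 0 ≠ 0 := by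
      intro h0; rw [h0, norm_zero] at h
      exact absurd (norm_nonneg (g 1 1)) (not_le.mpr h)
    set r : ℚ_[p] := g 1 1 / g 1 0 with hr
    have hrn : ‖r‖ ≤ 1 := by
      rw [hr, norm_div]
      exact le_of_lt ((div_lt_one (lt_of_le_of_lt (norm_nonneg _) h)).mpr h)
    have hK : !![-r, (1:ℚ_[p]); 1, 0] * !![(0:ℚ_[p]), 1; 1, r] = 1 := by
      rw [Matrix.mul_fin_two, Matrix.one_fin_two]; congr 1 <;> ring
    have hK' : !![(0:ℚ_[p]), 1; 1, r] * !![-r, (1:ℚ_[p]); 1, 0] = 1 := by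
      rw [Matrix.mul_fin_two, Matrix.one_fin_two]; congr 1 <;> ring
    refine ⟨g * !![-r, (1:ℚ_[p]); 1, 0], !![(0:ℚ_[p]), 1; 1, r], ?_, ?_, ?_, ?_, ?_⟩
    · simp [Matrix.mul_apply, Fin.sum_univ_two, hr]; field_simp; ring
    · have hdb : (g * !![-r, (1:ℚ_[p]); 1, 0]).det ≠ 0 := by
        rw [Matrix.det_mul, Matrix.det_fin_two_of]
        simp only [mul_zero, neg_mul, one_mul, zero_sub]
        simpa using hdg
      have hb10 : (g * !![-r, (1:ℚ_[p]); 1, 0]) 1 0 = 0 := by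
        simp [Matrix.mul_apply, Fin.sum_univ_two, hr]; field_simp; ring
      rw [Matrix.det_fin_two, hb10] at hdb
      intro h0; apply hdb; rw [h0]; ring
    · simp [Matrix.mul_apply, Fin.sum_univ_two]; exact h10
    · refine memKp_of hK' ?_ ?_ <;>
        · intro i j; fin_cases i <;> fin_cases j <;>
            simp [hrn, norm_neg, le_of_lt]
    · rw [Matrix.mul_assoc, hK, Matrix.mul_one]

end Stmt12Aux

namespace Stmt12Aux
variable {p : ℕ} [hp : Fact (Nat.Prime p)]

lemma exists_decomp_triang (b : Matrix (Fin 2) (Fin 2) ℚ_[p])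
    (h10 : b 1 0 = 0) (h00 : b 0 0 ≠ 0) (h11 : b 1 1 ≠ 0) :
    ∃ j : ℕ, ∃ t k : Matrix (Fin 2) (Fin 2) ℚ_[p],
      (IsUnit t ∧ t 0 1 = 0 ∧ t 1 0 = 0) ∧ k ∈ Kp p ∧ b = t * uMat p j * k := by
  have hp0 : (p : ℚ_[p]) ≠ 0 := by
    exact_mod_cast Nat.cast_ne_zero.mpr hp.out.ne_zero
  set c : ℚ_[p] := b 0 1 / b 0 0 with hc
  have hb01 : b 0 1 = b 0 0 * c := by rw [hc]; field_simp
  by_cases hcn : ‖c‖ ≤ 1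
  · -- j = 0
    refine ⟨0, !![b 0 0, 0; 0, b 1 1], !![1, c - 1; 0, 1], ⟨?_, by simp, by simp⟩, ?_, ?_⟩
    · rw [Matrix.isUnit_iff_isUnit_det, Matrix.det_fin_two_of]
      simpa using (mul_ne_zero h00 h11)
    · refine memKp_of (B := !![1, 1 - c; 0, 1]) ?_ ?_ ?_
      · rw [Matrix.mul_fin_two, Matrix.one_fin_two]; congr 1 <;> ring
      · intro i j; fin_cases i <;> fin_cases j <;> simp
        calc ‖c - 1‖ = ‖c + (-1)‖ := by ring_nf
          _ ≤ max ‖c‖ ‖(-1 : ℚ_[p])‖ := Padic.nonarchimedean _ _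
          _ ≤ 1 := by simp [hcn]
      · intro i j; fin_cases i <;> fin_cases j <;> simp
        calc ‖1 - c‖ = ‖(-c) + 1‖ := by ring_nf
          _ ≤ max ‖(-c)‖ ‖(1 : ℚ_[p])‖ := Padic.nonarchimedean _ _
          _ ≤ 1 := by simp [hcn]
    · have hu0 : uMat p 0 = !![(1:ℚ_[p]), 1; 0, 1] := by
        simp [uMat]
      rw [hu0]
      ext i j
      fin_cases i <;> fin_cases j <;>
        simp [Matrix.mul_apply, Fin.sum_univ_two, h10, hb01] <;> ring
  · -- j ≥ 1
    push_neg at hcn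
    have hc0 : c ≠ 0 := by
      intro h0; rw [h0, norm_zero] at hcn; linarith
    have hv : c.valuation < 0 := by
      by_contra hv
      push_neg at hv
      exact absurd ((Padic.norm_le_one_iff_val_nonneg c).mpr hv) (not_le.mpr hcn)
    set j : ℕ := (-c.valuation).toNat with hjdef
    have hj : (j : ℤ) = -c.valuation := Int.toNat_of_nonneg (by omega)
    set a : ℚ_[p] := c * (p : ℚ_[p]) ^ (j : ℕ) with ha
    have han : ‖a‖ = 1 := by
      rw [ha, norm_mul, Padic.norm_eq_zpow_neg_valuation hc0, Padic.norm_p_pow,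
        ← zpow_add₀ (by exact_mod_cast hp.out.pos.ne' : (p:ℝ) ≠ 0)]
      rw [hj]
      norm_num
    have ha0 : a ≠ 0 := by
      intro h0; rw [h0, norm_zero] at han; norm_num at han
    have hac : a * (p : ℚ_[p]) ^ (-(j:ℤ)) = c := by
      rw [ha, mul_assoc, ← zpow_natCast (p : ℚ_[p]) j, ← zpow_add₀ hp0]
      simp
    refine ⟨j, !![b 0 0 * a, 0; 0, b 1 1], !![a⁻¹, 0; 0, 1], ⟨?_, by simp, by simp⟩, ?_, ?_⟩
    · rw [Matrix.isUnit_iff_isUnit_det, Matrix.det_fin_two_of]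
      simpa using (mul_ne_zero (mul_ne_zero h00 ha0) h11)
    · refine memKp_of (B := !![a, 0; 0, 1]) ?_ ?_ ?_
      · rw [Matrix.mul_fin_two, Matrix.one_fin_two]
        congr 1 <;> simp [inv_mul_cancel₀ ha0]
      · intro i j; fin_cases i <;> fin_cases j <;> simp [norm_inv, han]
      · intro i j; fin_cases i <;> fin_cases j <;> simp [han]
    · ext i j
      fin_cases i <;> fin_cases j <;>
        simp [uMat, Matrix.mul_apply, Fin.sum_univ_two, h10, hb01]
      all_goals
        field_simp
        try (rw [ha]; try ring)

end Stmt12Aux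

namespace Stmt12Aux
variable {p : ℕ} [hp : Fact (Nat.Prime p)]

lemma uniq {j j' : ℕ} {t k t' k' : Matrix (Fin 2) (Fin 2) ℚ_[p]}
    (ht : IsUnit t ∧ t 0 1 = 0 ∧ t 1 0 = 0) (hk : k ∈ Kp p)
    (ht' : IsUnit t' ∧ t' 0 1 = 0 ∧ t' 1 0 = 0) (hk' : k' ∈ Kp p)
    (heq : t * uMat p j * k = t' * uMat p j' * k') : j = j' := by
  have hp1 : (1:ℝ) < (p:ℝ) := by exact_mod_cast hp.out.one_lt
  have hdt : t.det ≠ 0 := ((Matrix.isUnit_iff_isUnit_det t).1 ht.1).ne_zero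
  have hdt' : t'.det ≠ 0 := ((Matrix.isUnit_iff_isUnit_det t').1 ht'.1).ne_zero
  rw [Matrix.det_fin_two, ht.2.1, ht.2.2] at hdt
  rw [Matrix.det_fin_two, ht'.2.1, ht'.2.2] at hdt'
  have ha : t 0 0 ≠ 0 := by intro h0; apply hdt; rw [h0]; ring
  have ha' : t' 0 0 ≠ 0 := by intro h0; apply hdt'; rw [h0]; ring
  have hd' : t' 1 1 ≠ 0 := by intro h0; apply hdt'; rw [h0]; ring
  set n := k' * k⁻¹ with hndef
  have hn : n ∈ Kp p := Kp.mul hk' (Kp.inv hk)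
  have hkd : IsUnit k.det := (Matrix.isUnit_iff_isUnit_det k).1 hk.1
  have heq2 : t * uMat p j = t' * uMat p j' * n := by
    calc t * uMat p j = (t * uMat p j * k) * k⁻¹ := by
          rw [Matrix.mul_assoc (t * uMat p j), Matrix.mul_nonsing_inv k hkd, mul_one]
      _ = (t' * uMat p j' * k') * k⁻¹ := by rw [heq]
      _ = t' * uMat p j' * n := by rw [hndef, Matrix.mul_assoc]
  have e10 := congrFun (congrFun heq2 1) 0
  have e00 := congrFun (congrFun heq2 0) 0
  have e01 := congrFun (congrFun heq2 0) 1
  simp [uMat, Matrix.mul_apply, Fin.sum_univ_two, ht.2.1, ht.2.2, ht'.2.1, ht'.2.2] at e10 e00 e01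
  have hn10 : n 1 0 = 0 := e10.resolve_left hd'
  rw [hn10, mul_zero, add_zero] at e00
  have hnd : n.det ≠ 0 := ((Matrix.isUnit_iff_isUnit_det n).1 hn.1).ne_zero
  rw [Matrix.det_fin_two, hn10] at hnd
  have hn00 : n 0 0 ≠ 0 := by intro h0; apply hnd; rw [h0]; ring
  have hn11 : n 1 1 ≠ 0 := by intro h0; apply hnd; rw [h0]; ring
  have hnB : n * !![(n 0 0)⁻¹, -(n 0 1) / (n 0 0 * n 1 1); 0, (n 1 1)⁻¹] = 1 := by
    ext i j
    fin_cases i <;> fin_cases j <;>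
      simp [Matrix.mul_apply, Fin.sum_univ_two, hn10, Matrix.one_apply] <;>
      field_simp <;> ring
  have hninv := Matrix.inv_eq_right_inv hnB
  have hn001 : ‖n 0 0‖ = 1 := by
    have h1 := (hn.2 0 0).1
    have h2 := (hn.2 0 0).2
    rw [hninv] at h2
    rw [show (!![(n 0 0)⁻¹, -(n 0 1) / (n 0 0 * n 1 1); 0, (n 1 1)⁻¹] :
      Matrix (Fin 2) (Fin 2) ℚ_[p]) 0 0 = (n 0 0)⁻¹ from rfl, norm_inv] at h2
    have hpos : 0 < ‖n 0 0‖ := norm_pos_iff.mpr hn00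
    rw [inv_le_one₀ hpos] at h2
    exact le_antisymm h1 h2
  have hn111 : ‖n 1 1‖ = 1 := by
    have h1 := (hn.2 1 1).1
    have h2 := (hn.2 1 1).2
    rw [hninv] at h2
    rw [show (!![(n 0 0)⁻¹, -(n 0 1) / (n 0 0 * n 1 1); 0, (n 1 1)⁻¹] :
      Matrix (Fin 2) (Fin 2) ℚ_[p]) 1 1 = (n 1 1)⁻¹ from rfl, norm_inv] at h2
    have hpos : 0 < ‖n 1 1‖ := norm_pos_iff.mpr hn11
    rw [inv_le_one₀ hpos] at h2
    exact le_antisymm h1 h2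
  have key : n 0 1 = n 0 0 * ((p:ℚ_[p]) ^ j)⁻¹ - ((p:ℚ_[p]) ^ j')⁻¹ * n 1 1 := by
    apply mul_left_cancel₀ ha'
    rw [mul_sub]
    linear_combination (-1 : ℚ_[p]) * e01 + ((p:ℚ_[p]) ^ j)⁻¹ * e00
  have hqj : ∀ m : ℕ, ‖((p:ℚ_[p]) ^ m)⁻¹‖ = (p:ℝ) ^ m := by
    intro m
    rw [norm_inv, Padic.norm_p_pow, ← zpow_natCast (p:ℝ), ← zpow_neg, neg_neg]
  by_contra hne
  have hA : ‖n 0 0 * ((p:ℚ_[p]) ^ j)⁻¹‖ = (p:ℝ) ^ j := by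
    rw [norm_mul, hn001, one_mul, hqj]
  have hB : ‖((p:ℚ_[p]) ^ j')⁻¹ * n 1 1‖ = (p:ℝ) ^ j' := by
    rw [norm_mul, hn111, mul_one, hqj]
  have hABne : ‖n 0 0 * ((p:ℚ_[p]) ^ j)⁻¹‖ ≠ ‖-(((p:ℚ_[p]) ^ j')⁻¹ * n 1 1)‖ := by
    rw [norm_neg, hA, hB]
    intro h
    apply hne
    have : ((j:ℤ)) = (j':ℤ) := by
      rw [← zpow_natCast (p:ℝ), ← zpow_natCast (p:ℝ)] at h
      exact (zpow_right_inj₀ (by positivity) (ne_of_gt hp1)).1 h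
    exact_mod_cast this
  have hmax : ‖n 0 1‖ = max ((p:ℝ) ^ j) ((p:ℝ) ^ j') := by
    rw [key, sub_eq_add_neg, Padic.add_eq_max_of_ne hABne, norm_neg, hA, hB]
  have h1 := (hn.2 0 1).1
  rw [hmax] at h1
  rcases lt_or_gt_of_ne hne with hlt | hlt
  · have h2 : (1:ℝ) < (p:ℝ) ^ j' := one_lt_pow₀ hp1 (by omega)
    have := le_max_right ((p:ℝ) ^ j) ((p:ℝ) ^ j')
    linarith
  · have h2 : (1:ℝ) < (p:ℝ) ^ j := one_lt_pow₀ hp1 (by omega)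
    have := le_max_left ((p:ℝ) ^ j) ((p:ℝ) ^ j')
    linarith

end Stmt12Aux

/-- Every `g ∈ GL₂(ℚ_p)` lies in the double coset `T·u_j·K_p` for exactly one `j ∈ ℕ`,
where `T` is the diagonal torus. -/
theorem stmt12 (p : ℕ) [Fact (Nat.Prime p)]
    (g : Matrix (Fin 2) (Fin 2) ℚ_[p]) (hg : IsUnit g) :
    ∃! j : ℕ, ∃ t k : Matrix (Fin 2) (Fin 2) ℚ_[p],
      (IsUnit t ∧ t 0 1 = 0 ∧ t 1 0 = 0) ∧ k ∈ Kp p ∧ g = t * uMat p j * k := by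
  obtain ⟨b, k1, hb10, hb00, hb11, hk1, hgb⟩ := Stmt12Aux.exists_triang g hg
  obtain ⟨j, t, k, htd, hkK, hbt⟩ := Stmt12Aux.exists_decomp_triang b hb10 hb00 hb11
  refine ⟨j, ⟨t, k * k1, htd, Stmt12Aux.Kp.mul hkK hk1, by
    rw [hgb, hbt, Matrix.mul_assoc]⟩, ?_⟩
  rintro j' ⟨t', k', ht', hk', hgd'⟩
  exact Stmt12Aux.uniq ht' hk' htd (Stmt12Aux.Kp.mul hkK hk1)
    (by rw [← hgd', hgb, hbt, Matrix.mul_assoc])
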